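/- Let A ∈ ℝ^{n×m} and B ∈ ℝ^{n×p}, let p ∈ [0,1]^n be a probability distribution with p_k > 0 for every k such that row k of A or B is nonzero, and let S ∈ ℝ^{s×n} be the row sampling and rescaling matrix built from s i.i.d. indices drawn from p. Then for each fixed (i,j), the variance of the (i,j) entry of the approximate product satisfies Var[((S A)ᵀ S B)_{ij}] = Σ_{k=1}^n A_{ki}² B_{kj}²/(s p_k) − (AᵀB)_{ij}²/s. -/

import Mathlib

open Matrix MeasureTheory

/-- Squared Frobenius norm of a real matrix. -/
noncomputable def frobSq {m n : Type*} [Fintype m] [Fintype n] (M : Matrix m n ℝ) : ℝ :=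
  ∑ i, ∑ j, (M i j) ^ 2

/-- Square of the smallest singular value of a matrix, as the infimum of
squared norms `‖M x‖₂²` over unit vectors `x`. -/
noncomputable def sigmaMinSq {m n : Type*} [Fintype m] [Fintype n] (M : Matrix m n ℝ) : ℝ :=
  sInf {c : ℝ | ∃ x : n → ℝ, ∑ i, (x i) ^ 2 = 1 ∧ c = ∑ j, (M.mulVec x j) ^ 2}

/-- Square of the largest singular value of a matrix. -/
noncomputable def sigmaMaxSq {m n : Type*} [Fintype m] [Fintype n] (M : Matrix m n ℝ) : ℝ :=
  sSup {c : ℝ | ∃ x : n → ℝ, ∑ i, (x i) ^ 2 = 1 ∧ c = ∑ j, (M.mulVec x j) ^ 2}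

/-- The weighted row-sampling ("RandSample") matrix determined by the sampled
indices `ξ : Fin s → Fin N` and the sampling probabilities `p`:
`S j i = 1/√(s pᵢ)` if `ξ j = i` and `0` otherwise. -/
noncomputable def randSampleMatrix {N : ℕ} (s : ℕ) (p : Fin N → ℝ) (ξ : Fin s → Fin N) :
    Matrix (Fin s) (Fin N) ℝ :=
  fun j i => if ξ j = i then 1 / Real.sqrt (s * p i) else 0

/-- The measure on `Fin N` in which index `i` has probability `p i`. -/
noncomputable def sampleMeasure {N : ℕ} (p : Fin N → ℝ) : Measure (Fin N) :=
  ∑ i, ENNReal.ofReal (p i) • Measure.dirac i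

/-- The law of `s` i.i.d. indices, each drawn from the distribution `p` on `Fin N`. -/
noncomputable def sampleMeasurePi {N : ℕ} (s : ℕ) (p : Fin N → ℝ) :
    Measure (Fin s → Fin N) :=
  Measure.pi fun _ => sampleMeasure p

lemma sampleMeasure_singleton {N : ℕ} (p : Fin N → ℝ) (k : Fin N) :
    sampleMeasure p {k} = ENNReal.ofReal (p k) := by
  unfold sampleMeasure
  rw [Measure.finset_sum_apply]
  simp [Measure.smul_apply, Measure.dirac_apply', Set.indicator_apply]

instance sampleMeasure_finite {N : ℕ} (p : Fin N → ℝ) : IsFiniteMeasure (sampleMeasure p) := by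
  constructor
  unfold sampleMeasure
  rw [Measure.finset_sum_apply]
  exact ENNReal.sum_lt_top.2 fun i _ => by simp [Measure.smul_apply]

lemma sampleMeasurePi_eq {N s : ℕ} (p : Fin N → ℝ) :
    sampleMeasurePi s p
      = ∑ ξ : Fin s → Fin N, (∏ t, ENNReal.ofReal (p (ξ t))) • Measure.dirac ξ := by
  apply Measure.ext_of_singleton
  intro ξ
  rw [Measure.finset_sum_apply]
  have h1 : ({ξ} : Set (Fin s → Fin N)) = Set.pi Set.univ (fun t => {ξ t}) :=
    (Set.univ_pi_singleton ξ).symm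
  rw [sampleMeasurePi, h1, Measure.pi_pi]
  simp only [sampleMeasure_singleton]
  rw [Finset.sum_eq_single ξ]
  · simp
  · intro b _ hb
    simp [Measure.smul_apply, Measure.dirac_apply', Set.indicator_apply, hb]
    exact Or.inr (Function.ne_iff.mp hb)
  · simp

lemma integral_sampleMeasurePi {N s : ℕ} (p : Fin N → ℝ) (hp : ∀ k, 0 ≤ p k)
    (f : (Fin s → Fin N) → ℝ) :
    ∫ ξ, f ξ ∂(sampleMeasurePi s p) = ∑ ξ : Fin s → Fin N, (∏ t, p (ξ t)) * f ξ := by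
  rw [sampleMeasurePi_eq]
  rw [integral_finset_sum_measure (fun ξ _ => Integrable.smul_measure (Integrable.of_finite)
    (by exact ENNReal.prod_ne_top fun t _ => ENNReal.ofReal_ne_top))]
  refine Finset.sum_congr rfl fun ξ _ => ?_
  rw [integral_smul_measure, integral_dirac, ENNReal.toReal_prod, smul_eq_mul]
  congr 1
  exact Finset.prod_congr rfl fun t _ => ENNReal.toReal_ofReal (hp _)

lemma randSample_entry {n m q s : ℕ} (A : Matrix (Fin n) (Fin m) ℝ) (B : Matrix (Fin n) (Fin q) ℝ)
    (p : Fin n → ℝ) (hp : ∀ k, 0 ≤ p k) (i : Fin m) (j : Fin q) (ξ : Fin s → Fin n) :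
    ((randSampleMatrix s p ξ * A)ᵀ * (randSampleMatrix s p ξ * B)) i j
      = ∑ t, A (ξ t) i * B (ξ t) j / ((s : ℝ) * p (ξ t)) := by
  simp only [mul_apply, transpose_apply, randSampleMatrix, ite_mul, zero_mul,
    Finset.sum_ite_eq, Finset.mem_univ, if_true]
  refine Finset.sum_congr rfl fun t _ => ?_
  have hx : (0:ℝ) ≤ (s : ℝ) * p (ξ t) := mul_nonneg (Nat.cast_nonneg s) (hp _)
  have h2 : (1 / Real.sqrt ((s:ℝ) * p (ξ t))) * (1 / Real.sqrt ((s:ℝ) * p (ξ t)))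
      = 1 / ((s:ℝ) * p (ξ t)) := by
    rw [div_mul_div_comm, one_mul, Real.mul_self_sqrt hx]
  calc (1 / Real.sqrt ((s:ℝ) * p (ξ t)) * A (ξ t) i) * (1 / Real.sqrt ((s:ℝ) * p (ξ t)) * B (ξ t) j)
      = A (ξ t) i * B (ξ t) j * ((1 / Real.sqrt ((s:ℝ) * p (ξ t))) * (1 / Real.sqrt ((s:ℝ) * p (ξ t)))) := by ring
    _ = A (ξ t) i * B (ξ t) j / ((s : ℝ) * p (ξ t)) := by rw [h2]; ring

/-- key factorization: weighted sum over sampled tuples of a product over a subset of coordinates. -/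
lemma sum_weight_prod {n s : ℕ} (p : Fin n → ℝ) (hp1 : ∑ k, p k = 1)
    (T : Finset (Fin s)) (h : Fin s → Fin n → ℝ) :
    ∑ ξ : Fin s → Fin n, (∏ u, p (ξ u)) * ∏ u ∈ T, h u (ξ u)
      = ∏ u ∈ T, ∑ k, p k * h u k := by
  classical
  have key : ∀ ξ : Fin s → Fin n,
      (∏ u, p (ξ u)) * ∏ u ∈ T, h u (ξ u)
        = ∏ u, (fun u k => p k * (if u ∈ T then h u k else 1)) u (ξ u) := by
    intro ξ
    rw [Finset.prod_mul_distrib]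
    congr 1
    rw [Finset.prod_ite_mem, Finset.univ_inter]
  rw [Finset.sum_congr rfl fun ξ _ => key ξ,
    ← Fintype.prod_sum (fun u k => p k * (if u ∈ T then h u k else 1))]
  have inner : ∀ u : Fin s, (∑ k, p k * (if u ∈ T then h u k else 1))
      = if u ∈ T then ∑ k, p k * h u k else 1 := by
    intro u
    split_ifs with hu <;> simp [hp1]
  rw [Finset.prod_congr rfl fun u _ => inner u, Finset.prod_ite_mem, Finset.univ_inter]

/-- variance of an entry of the randomized matrix product.
For each fixed `(i,j)`,
`Var[((SA)ᵀ SB)_{ij}] = Σ_k A_{ki}² B_{kj}²/(s p_k) − (AᵀB)_{ij}²/s`,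
where the variance is `E[X²] − (E[X])²`. -/
theorem randomized_matmul_entry_variance {n m q s : ℕ} (hs : 0 < s)
    (A : Matrix (Fin n) (Fin m) ℝ) (B : Matrix (Fin n) (Fin q) ℝ)
    (p : Fin n → ℝ) (hp0 : ∀ k, 0 ≤ p k) (hp1 : ∑ k, p k = 1)
    (hpos : ∀ k, (A k ≠ 0 ∨ B k ≠ 0) → 0 < p k)
    (i : Fin m) (j : Fin q) :
    (∫ ξ, (((randSampleMatrix s p ξ * A)ᵀ * (randSampleMatrix s p ξ * B)) i j) ^ 2
        ∂(sampleMeasurePi s p))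
      - (∫ ξ, ((randSampleMatrix s p ξ * A)ᵀ * (randSampleMatrix s p ξ * B)) i j
          ∂(sampleMeasurePi s p)) ^ 2
      = (∑ k, (A k i) ^ 2 * (B k j) ^ 2 / (s * p k)) - ((Aᵀ * B) i j) ^ 2 / s := by
  classical
  set g : Fin n → ℝ := fun k => A k i * B k j / ((s:ℝ) * p k) with hg
  have hsne : ((s:ℝ)) ≠ 0 := Nat.cast_ne_zero.2 hs.ne'
  have hzero : ∀ k, p k = 0 → A k i = 0 ∧ B k j = 0 := by
    intro k hk
    by_contra hc
    rw [not_and_or] at hc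
    have hk' : A k ≠ 0 ∨ B k ≠ 0 := by
      rcases hc with h | h
      · exact Or.inl fun h0 => h (by rw [h0]; rfl)
      · exact Or.inr fun h0 => h (by rw [h0]; rfl)
    exact absurd (hpos k hk') (by rw [hk]; exact lt_irrefl 0)
  set S1 : ℝ := ∑ k, p k * g k with hS1def
  set S2 : ℝ := ∑ k, p k * (g k * g k) with hS2def
  have hS1 : (Aᵀ * B) i j = (s:ℝ) * S1 := by
    have h1 : (Aᵀ * B) i j = ∑ k, A k i * B k j := by simp [mul_apply, transpose_apply]
    rw [h1, hS1def, Finset.mul_sum]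
    refine Finset.sum_congr rfl fun k _ => ?_
    by_cases hk : p k = 0
    · obtain ⟨hA, _⟩ := hzero k hk
      simp [hg, hA]
    · have hps : (s:ℝ) * p k ≠ 0 := mul_ne_zero hsne hk
      field_simp [hg]
      simp only [hg]; field_simp
  have hS2 : (∑ k, (A k i) ^ 2 * (B k j) ^ 2 / ((s:ℝ) * p k)) = (s:ℝ) * S2 := by
    rw [hS2def, Finset.mul_sum]
    refine Finset.sum_congr rfl fun k _ => ?_
    by_cases hk : p k = 0
    · obtain ⟨hA, _⟩ := hzero k hk
      simp [hg, hA]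
    · have hps : (s:ℝ) * p k ≠ 0 := mul_ne_zero hsne hk
      field_simp [hg]
      simp only [hg]; field_simp
  -- the entry as a function of ξ
  have hentry : ∀ ξ : Fin s → Fin n,
      ((randSampleMatrix s p ξ * A)ᵀ * (randSampleMatrix s p ξ * B)) i j = ∑ t, g (ξ t) :=
    fun ξ => randSample_entry A B p hp0 i j ξ
  -- mean
  have hmean : (∫ ξ, ((randSampleMatrix s p ξ * A)ᵀ * (randSampleMatrix s p ξ * B)) i j
      ∂(sampleMeasurePi s p)) = (s:ℝ) * S1 := by
    simp only [hentry]
    rw [integral_sampleMeasurePi p hp0]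
    have step : ∀ ξ : Fin s → Fin n, (∏ t, p (ξ t)) * ∑ t, g (ξ t)
        = ∑ t, (∏ u, p (ξ u)) * ∏ u ∈ ({t} : Finset (Fin s)), g (ξ u) := by
      intro ξ
      rw [Finset.mul_sum]
      exact Finset.sum_congr rfl fun t _ => by rw [Finset.prod_singleton]
    rw [Finset.sum_congr rfl fun ξ _ => step ξ, Finset.sum_comm]
    have : ∀ t : Fin s, ∑ ξ : Fin s → Fin n,
        (∏ u, p (ξ u)) * ∏ u ∈ ({t} : Finset (Fin s)), g (ξ u) = S1 := by
      intro t
      rw [sum_weight_prod p hp1 ({t} : Finset (Fin s)) (fun _ k => g k), Finset.prod_singleton]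
    rw [Finset.sum_congr rfl fun t _ => this t, Finset.sum_const, Finset.card_univ,
      Fintype.card_fin, nsmul_eq_mul]
  -- second moment
  have hsq : (∫ ξ, (((randSampleMatrix s p ξ * A)ᵀ * (randSampleMatrix s p ξ * B)) i j) ^ 2
      ∂(sampleMeasurePi s p)) = (s:ℝ) * ((s:ℝ) * S1 ^ 2 + (S2 - S1 ^ 2)) := by
    simp only [hentry]
    rw [integral_sampleMeasurePi p hp0]
    have step : ∀ ξ : Fin s → Fin n, (∏ t, p (ξ t)) * (∑ t, g (ξ t)) ^ 2
        = ∑ t, ∑ t', (∏ u, p (ξ u)) * (g (ξ t) * g (ξ t')) := by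
      intro ξ
      rw [sq, Finset.sum_mul_sum, Finset.mul_sum]
      exact Finset.sum_congr rfl fun t _ => by rw [Finset.mul_sum]
    rw [Finset.sum_congr rfl fun ξ _ => step ξ, Finset.sum_comm]
    have swap2 : ∀ t : Fin s, ∑ ξ : Fin s → Fin n, ∑ t',
        (∏ u, p (ξ u)) * (g (ξ t) * g (ξ t'))
        = ∑ t', ∑ ξ : Fin s → Fin n, (∏ u, p (ξ u)) * (g (ξ t) * g (ξ t')) :=
      fun t => Finset.sum_comm
    rw [Finset.sum_congr rfl fun t _ => swap2 t]
    have hpair : ∀ t t' : Fin s, ∑ ξ : Fin s → Fin n,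
        (∏ u, p (ξ u)) * (g (ξ t) * g (ξ t')) = if t = t' then S2 else S1 ^ 2 := by
      intro t t'
      by_cases h : t = t'
      · subst h
        rw [if_pos rfl, hS2def]
        have := sum_weight_prod p hp1 ({t} : Finset (Fin s)) (fun _ k => g k * g k)
        rw [Finset.prod_singleton] at this
        rw [← this]
        exact Finset.sum_congr rfl fun ξ _ => by rw [Finset.prod_singleton]
      · rw [if_neg h]
        have hts : t ∉ ({t'} : Finset (Fin s)) := by simp [h]
        have := sum_weight_prod p hp1 ({t, t'} : Finset (Fin s)) (fun _ k => g k)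
        rw [Finset.prod_insert hts, Finset.prod_singleton] at this
        have h2 : ∑ ξ : Fin s → Fin n, (∏ u, p (ξ u)) * (g (ξ t) * g (ξ t'))
            = ∑ ξ : Fin s → Fin n, (∏ u, p (ξ u)) * ∏ u ∈ ({t, t'} : Finset (Fin s)), g (ξ u) :=
          Finset.sum_congr rfl fun ξ _ => by
            rw [Finset.prod_insert hts, Finset.prod_singleton]
        rw [h2, this, ← hS1def, sq]
    rw [Finset.sum_congr rfl fun t _ => Finset.sum_congr rfl fun t' _ => hpair t t']
    have row : ∀ t : Fin s, ∑ t' : Fin s, (if t = t' then S2 else S1 ^ 2)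
        = (s:ℝ) * S1 ^ 2 + (S2 - S1 ^ 2) := by
      intro t
      have : ∀ t' : Fin s, (if t = t' then S2 else S1 ^ 2)
          = S1 ^ 2 + (if t = t' then S2 - S1 ^ 2 else 0) := fun t' => by split_ifs <;> ring
      rw [Finset.sum_congr rfl fun t' _ => this t', Finset.sum_add_distrib, Finset.sum_const,
        Finset.sum_ite_eq, Finset.card_univ, Fintype.card_fin, nsmul_eq_mul]
      simp
    rw [Finset.sum_congr rfl fun t _ => row t, Finset.sum_const, Finset.card_univ,
      Fintype.card_fin, nsmul_eq_mul]
  rw [hmean, hsq, hS1, hS2]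
  field_simp
  ring
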